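/- Let G be a finite connected simple graph and let f : V(G) → ℕ be a function such that f(u) ≥ deg_G(u) − 1 for all vertices u, and f(x) ≥ deg_G(x) for some vertex x. Then G is f-degenerate. -/
import Mathlib


open scoped Classical

namespace WeakDeg

variable {V : Type*}

/-- `WeakDegenOn G S f` means: starting from the induced subgraph `G[S]` of `G` with value
function `f`, it is possible to remove all vertices by a sequence of legal applications of the
operations `Delete` and `DelSave`. `Delete(u)` removes `u` and decreases by one the value of
every remaining neighbor of `u`; it is legal if the resulting function is nonnegative on the
remaining vertices. `DelSave(u, w)` (for `w` a neighbor of `u` with `f w < f u`) removes `u` and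
decreases by one the value of every remaining neighbor of `u` except `w`; it is legal if
`f w < f u` and the resulting function is nonnegative on the remaining vertices. -/
inductive WeakDegenOn (G : SimpleGraph V) : Finset V → (V → ℤ) → Prop
  | empty (f : V → ℤ) : WeakDegenOn G ∅ f
  | delete (S : Finset V) (f : V → ℤ) (u : V) (hu : u ∈ S)
      (hleg : ∀ v ∈ S.erase u, 0 ≤ if G.Adj u v then f v - 1 else f v)
      (h : WeakDegenOn G (S.erase u) fun v => if G.Adj u v then f v - 1 else f v) :
      WeakDegenOn G S f
  | delSave (S : Finset V) (f : V → ℤ) (u w : V) (hu : u ∈ S) (hw : w ∈ S)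
      (hadj : G.Adj u w) (hlt : f w < f u)
      (hleg : ∀ v ∈ S.erase u, 0 ≤ if G.Adj u v ∧ v ≠ w then f v - 1 else f v)
      (h : WeakDegenOn G (S.erase u) fun v => if G.Adj u v ∧ v ≠ w then f v - 1 else f v) :
      WeakDegenOn G S f

/-- `G` is weakly `f`-degenerate, for `f : V → ℕ`. -/
def WeaklyDegenerateWith (G : SimpleGraph V) [Fintype V] (f : V → ℕ) : Prop :=
  WeakDegenOn G Finset.univ fun v => (f v : ℤ)

/-- `G` is weakly `d`-degenerate. -/
def WeaklyDegenerate (G : SimpleGraph V) [Fintype V] (d : ℕ) : Prop :=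
  WeaklyDegenerateWith G fun _ => d

/-- The weak degeneracy `wd(G)` of `G`: the least `d` such that `G` is weakly `d`-degenerate. -/
noncomputable def weakDegeneracy (G : SimpleGraph V) [Fintype V] : ℕ :=
  sInf {d : ℕ | WeaklyDegenerate G d}

/-- `DegenOn G S f` means: starting from the induced subgraph `G[S]` with value function `f`,
it is possible to remove all vertices by a sequence of legal applications of `Delete` alone. -/
inductive DegenOn (G : SimpleGraph V) : Finset V → (V → ℤ) → Prop
  | empty (f : V → ℤ) : DegenOn G ∅ f
  | delete (S : Finset V) (f : V → ℤ) (u : V) (hu : u ∈ S)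
      (hleg : ∀ v ∈ S.erase u, 0 ≤ if G.Adj u v then f v - 1 else f v)
      (h : DegenOn G (S.erase u) fun v => if G.Adj u v then f v - 1 else f v) :
      DegenOn G S f

lemma exists_adj_dist_lt {V : Type*} (G : SimpleGraph V) (hconn : G.Connected) (x v : V)
    (h : v ≠ x) : ∃ w, G.Adj v w ∧ G.dist x w < G.dist x v := by
  obtain ⟨p, hp⟩ := (hconn x v).exists_walk_length_eq_dist
  have hq : (p.reverse).length = G.dist x v := by rw [SimpleGraph.Walk.length_reverse, hp]
  cases hq' : p.reverse with
  | nil => exact absurd rfl h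
  | cons hadj q =>
    refine ⟨_, hadj, ?_⟩
    have h1 : G.dist x _ ≤ q.reverse.length := SimpleGraph.dist_le _
    have h2 : q.length + 1 = G.dist x v := by rw [← hq, hq']; simp
    rw [SimpleGraph.Walk.length_reverse] at h1
    omega

lemma aux {V : Type*} [Fintype V] (G : SimpleGraph V) [DecidableRel G.Adj]
    (x : V) (d : V → ℕ) (hdx : ∀ v, d x ≤ d v) :
    ∀ n (S : Finset V) (f : V → ℤ), S.card = n → x ∈ S →
    (∀ v ∈ S, ((S ∩ G.neighborFinset v).card : ℤ) ≤ f v + 1) →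
    ((S ∩ G.neighborFinset x).card : ℤ) ≤ f x →
    (∀ v ∈ S, v ≠ x → ∃ w ∈ S, G.Adj v w ∧ d w < d v) →
    DegenOn G S f := by
  intro n
  induction n using Nat.strong_induction_on with
  | _ n IH =>
    intro S f hcard hx h1 h2 h3
    obtain ⟨u, hu, hmax⟩ := Finset.exists_max_image S d ⟨x, hx⟩
    by_cases hux : u = x
    · -- then S = {x}
      subst hux
      have hS : S = {u} := by
        apply Finset.eq_singleton_iff_unique_mem.mpr
        refine ⟨hx, fun v hv => ?_⟩
        by_contra hvx
        obtain ⟨w, hw, hadj, hlt⟩ := h3 v hv hvx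
        have := hmax v hv
        have := hdx w
        omega
      have herase : S.erase u = ∅ := by rw [hS]; simp
      refine DegenOn.delete S f u hx ?_ ?_
      · intro v hv; rw [herase] at hv; exact absurd hv (Finset.notMem_empty v)
      · rw [herase]; exact DegenOn.empty _
    · -- delete u
      set S' := S.erase u with hS'
      set f' : V → ℤ := fun v => if G.Adj u v then f v - 1 else f v with hf'
      have hxS' : x ∈ S' := Finset.mem_erase.mpr ⟨fun h => hux h.symm, hx⟩
      have hkey : ∀ v ∈ S', ((S' ∩ G.neighborFinset v).card : ℤ) =
          ((S ∩ G.neighborFinset v).card : ℤ) - (if G.Adj u v then 1 else 0) := by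
        intro v hv
        by_cases hadj : G.Adj u v
        · have hmem : u ∈ S ∩ G.neighborFinset v := by
            simp [Finset.mem_inter, hu, hadj.symm]
          have : S' ∩ G.neighborFinset v = (S ∩ G.neighborFinset v).erase u := by
            ext w; simp [hS', Finset.mem_erase, Finset.mem_inter, and_assoc, and_comm,
              and_left_comm]
          rw [this, if_pos hadj]
          have := Finset.card_erase_add_one hmem
          omega
        · have : S' ∩ G.neighborFinset v = S ∩ G.neighborFinset v := by
            ext w
            simp only [hS', Finset.mem_inter, Finset.mem_erase, SimpleGraph.mem_neighborFinset]
            constructor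
            · rintro ⟨⟨_, hw⟩, hadj'⟩; exact ⟨hw, hadj'⟩
            · rintro ⟨hw, hadj'⟩
              refine ⟨⟨fun he => hadj ?_, hw⟩, hadj'⟩
              subst he; exact hadj'.symm
          rw [this, if_neg hadj]; ring
      have h1' : ∀ v ∈ S', ((S' ∩ G.neighborFinset v).card : ℤ) ≤ f' v + 1 := by
        intro v hv
        rw [hkey v hv]
        have := h1 v (Finset.mem_of_mem_erase hv)
        simp only [hf']
        split <;> omega
      have h2' : ((S' ∩ G.neighborFinset x).card : ℤ) ≤ f' x := by
        rw [hkey x hxS']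
        simp only [hf']
        split <;> omega
      have h3' : ∀ v ∈ S', v ≠ x → ∃ w ∈ S', G.Adj v w ∧ d w < d v := by
        intro v hv hvx
        obtain ⟨w, hw, hadj, hlt⟩ := h3 v (Finset.mem_of_mem_erase hv) hvx
        refine ⟨w, Finset.mem_erase.mpr ⟨fun he => ?_, hw⟩, hadj, hlt⟩
        subst he
        have := hmax v (Finset.mem_of_mem_erase hv)
        omega
      have hleg : ∀ v ∈ S', 0 ≤ f' v := by
        intro v hv
        by_cases hvx : v = x
        · subst hvx
          exact le_trans (by positivity) h2'
        · obtain ⟨w, hw, hadj, _⟩ := h3' v hv hvx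
          have hne : (S' ∩ G.neighborFinset v).Nonempty :=
            ⟨w, by simp [Finset.mem_inter, hw, hadj]⟩
          have hc : 1 ≤ (S' ∩ G.neighborFinset v).card := Finset.card_pos.mpr hne
          have := h1' v hv
          omega
      have hcard' : S'.card < n := by
        have hpos : 0 < S.card := Finset.card_pos.mpr ⟨u, hu⟩
        rw [hS', Finset.card_erase_of_mem hu]
        omega
      have hmain := IH S'.card hcard' S' f' rfl hxS' h1' h2' h3'
      refine DegenOn.delete S f u hu ?_ ?_
      · intro v hv
        rw [← hS'] at hv
        have h0 := hleg v hv
        simp only [hf'] at h0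
        by_cases hadj : G.Adj u v
        · rwa [if_pos hadj] at h0 ⊢
        · rwa [if_neg hadj] at h0 ⊢
      · convert hmain using 2 with v
        by_cases hadj : G.Adj u v <;> simp [hf', hadj]

/-- If `G` is connected, `f(u) ≥ deg_G(u) - 1` for all `u`, and `f(x) ≥ deg_G(x)` for some `x`,
then `G` is `f`-degenerate. -/
theorem degenerate_of_degree_bounds {V : Type*} [Fintype V] (G : SimpleGraph V)
    [DecidableRel G.Adj] (hconn : G.Connected) (f : V → ℕ)
    (h1 : ∀ u, G.degree u ≤ f u + 1) (h2 : ∃ x, G.degree x ≤ f x) :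
    DegenOn G Finset.univ fun v => (f v : ℤ) := by
  obtain ⟨x, hx⟩ := h2
  refine aux G x (G.dist x) (fun v => by rw [SimpleGraph.dist_self]; exact Nat.zero_le _) Finset.univ.card Finset.univ _ rfl
    (Finset.mem_univ x) ?_ ?_ ?_
  · intro v _
    rw [Finset.univ_inter, SimpleGraph.card_neighborFinset_eq_degree]
    exact_mod_cast h1 v
  · rw [Finset.univ_inter, SimpleGraph.card_neighborFinset_eq_degree]
    exact_mod_cast hx
  · intro v _ hvx
    obtain ⟨w, hadj, hlt⟩ := exists_adj_dist_lt G hconn x v hvx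
    exact ⟨w, Finset.mem_univ w, hadj, hlt⟩

end WeakDeg
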